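/- Let Δ, d, k be positive integers with (d+1)k ≥ Δ + 1, and let G be an n-vertex graph with maximum degree at most Δ. Suppose that G has no equitable d-degenerate k-colouring but has a minimal near-equitable d-degenerate k-colouring φ. Then for every V ∈ 𝒯, every vertex v ∈ V is non-movable to any colour class in 𝒜 ∖ (𝒯 ∪ {U_-}); in particular, v has at least (d+1)(a − 1 − t) neighbours in the union of the classes of 𝒜 ∖ (𝒯 ∪ {U_-}). -/
import Mathlib


open Finset

attribute [local instance] Classical.propDecidable

variable {V : Type*} [Fintype V] [DecidableEq V]

/-- The subgraph of `G` induced on the vertex set `S` is `d`-degenerate: every nonempty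
subset of `S` contains a vertex having at most `d` neighbours inside that subset. -/
def DegenOn (G : SimpleGraph V) (d : ℕ) (S : Finset V) : Prop :=
  ∀ s : Finset V, s ⊆ S → s.Nonempty → ∃ v ∈ s, (s.filter (fun u => G.Adj v u)).card ≤ d

/-- The colour class of colour `i` under the colouring `f`. -/
def cls {k : ℕ} (f : V → Fin k) (i : Fin k) : Finset V :=
  Finset.univ.filter (fun v => f v = i)

/-- `f` is a `d`-degenerate `k`-colouring of `G`: each colour class induces a
`d`-degenerate subgraph. -/
def IsDegenColoring (G : SimpleGraph V) (d : ℕ) {k : ℕ} (f : V → Fin k) : Prop :=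
  ∀ i, DegenOn G d (cls f i)

/-- `f` is an equitable colouring: any two colour classes differ in size by at most one. -/
def IsEquitable {k : ℕ} (f : V → Fin k) : Prop :=
  ∀ i j, (cls f i).card ≤ (cls f j).card + 1

/-- `f` is a near-equitable `k`-colouring of an `n`-vertex graph (conditions (E1),(E2)):
with the colour classes sorted by size, `⌊n/k⌋ − 1 ≤ |C_1| ≤ ⌊n/k⌋ ≤ |C_2| ≤ … ≤
|C_{k−1}| ≤ ⌈n/k⌉ ≤ |C_k| ≤ ⌈n/k⌉ + 1`, and `2 ≤ |C_k| − |C_1| ≤ 3`.  Stated label-free: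
all class sizes lie in `[⌊n/k⌋ − 1, ⌈n/k⌉ + 1]`, at most one class is smaller than
`⌊n/k⌋`, at most one class is larger than `⌈n/k⌉`, some class has size `≤ ⌊n/k⌋`, some
class has size `≥ ⌈n/k⌉`, and the largest class exceeds the smallest by at least `2` and
at most `3`.  (Here `⌈n/k⌉ = (n + k - 1) / k` in natural division.) -/
def NearEquitable (n : ℕ) {k : ℕ} (f : V → Fin k) : Prop :=
  (∀ i, n / k - 1 ≤ (cls f i).card ∧ (cls f i).card ≤ (n + k - 1) / k + 1) ∧
  (Finset.univ.filter (fun i => (cls f i).card < n / k)).card ≤ 1 ∧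
  (Finset.univ.filter (fun i => (n + k - 1) / k < (cls f i).card)).card ≤ 1 ∧
  (∃ i, (cls f i).card ≤ n / k) ∧
  (∃ i, (n + k - 1) / k ≤ (cls f i).card) ∧
  (∃ i j, (cls f i).card + 2 ≤ (cls f j).card) ∧
  (∀ i j, (cls f j).card ≤ (cls f i).card + 3)

/-- The vertex `v` is movable to the colour class of colour `j`: `v` has a different
colour, and adding `v` to that class keeps it `d`-degenerate. -/
def Movable (G : SimpleGraph V) (d : ℕ) {k : ℕ} (f : V → Fin k) (v : V) (j : Fin k) :
    Prop :=
  f v ≠ j ∧ DegenOn G d (insert v (cls f j))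

/-- Arc of the auxiliary digraph `D`: there is an arc from colour `i` to colour `j`
(`i ≠ j`) iff some vertex of class `i` is movable to class `j`. -/
def MvArc (G : SimpleGraph V) (d : ℕ) {k : ℕ} (f : V → Fin k) (i j : Fin k) : Prop :=
  i ≠ j ∧ ∃ v, f v = i ∧ Movable G d f v j

/-- Class `i` is accessible to class `j`: `D` has a (possibly trivial) directed path from
`i` to `j`. -/
def AccTo (G : SimpleGraph V) (d : ℕ) {k : ℕ} (f : V → Fin k) : Fin k → Fin k → Prop :=
  Relation.ReflTransGen (MvArc G d f)

/-- Accessibility within the subdigraph of `D` induced on the set `S` of colours. -/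
def AccToWithin (G : SimpleGraph V) (d : ℕ) {k : ℕ} (f : V → Fin k)
    (S : Finset (Fin k)) : Fin k → Fin k → Prop :=
  Relation.ReflTransGen (fun i j => i ∈ S ∧ j ∈ S ∧ MvArc G d f i j)

/-- Class `i` has minimum size among all colour classes. -/
def IsMinClass {k : ℕ} (f : V → Fin k) (i : Fin k) : Prop :=
  ∀ j, (cls f i).card ≤ (cls f j).card

/-- Class `i` is accessible: it is accessible to some colour class of minimum size. -/
def Accessible (G : SimpleGraph V) (d : ℕ) {k : ℕ} (f : V → Fin k) (i : Fin k) : Prop :=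
  ∃ j, IsMinClass f j ∧ AccTo G d f i j

/-- `𝒜`: the set of accessible colours. -/
noncomputable def Aset (G : SimpleGraph V) (d : ℕ) {k : ℕ} (f : V → Fin k) :
    Finset (Fin k) :=
  Finset.univ.filter (fun i => Accessible G d f i)

/-- `ℬ`: the set of non-accessible colours. -/
noncomputable def Bset (G : SimpleGraph V) (d : ℕ) {k : ℕ} (f : V → Fin k) :
    Finset (Fin k) :=
  Finset.univ.filter (fun i => ¬ Accessible G d f i)

/-- `A`: the union of the accessible colour classes. -/
noncomputable def Averts (G : SimpleGraph V) (d : ℕ) {k : ℕ} (f : V → Fin k) : Finset V :=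
  Finset.univ.filter (fun v => Accessible G d f (f v))

/-- `B`: the union of the non-accessible colour classes. -/
noncomputable def Bverts (G : SimpleGraph V) (d : ℕ) {k : ℕ} (f : V → Fin k) : Finset V :=
  Finset.univ.filter (fun v => ¬ Accessible G d f (f v))

/-- The colours used by the subdigraphs `D_1, …, D_{i-1}` preceding `D_i`. -/
def UsedBefore {k q : ℕ} (𝒟 : Fin q → Finset (Fin k)) (i : Fin q) : Finset (Fin k) :=
  (Finset.univ.filter (fun i' => i' < i)).biUnion 𝒟

/-- `(𝒟, trm)` is the decomposition `D_1, …, D_q` of `𝒜` with terminals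
`trm 1, …, trm q`: at each step `i`, `trm i` is the smallest-index minimum-size colour
class not yet used (here "smallest index" is the smallest colour, the classes being
labelled in non-decreasing order of size), `D_i` consists of the unused accessible classes
accessible to `trm i`, the process exhausts all minimum-size classes, and every accessible
class belongs to some `D_i`. -/
def IsDecomp (G : SimpleGraph V) (d : ℕ) {k : ℕ} (f : V → Fin k) {q : ℕ}
    (𝒟 : Fin q → Finset (Fin k)) (trm : Fin q → Fin k) : Prop :=
  (∀ i : Fin q,
      IsMinClass f (trm i) ∧
      trm i ∉ UsedBefore 𝒟 i ∧
      (∀ j, IsMinClass f j → j ∉ UsedBefore 𝒟 i → trm i ≤ j) ∧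
      (∀ u, u ∈ 𝒟 i ↔
        Accessible G d f u ∧ u ∉ UsedBefore 𝒟 i ∧ AccTo G d f u (trm i))) ∧
  (∀ j, IsMinClass f j → ∃ i, j ∈ 𝒟 i) ∧
  (∀ u, Accessible G d f u → ∃ i, u ∈ 𝒟 i)

/-- `𝒯` for the choice `U` of removed class: the classes of `D_- − U` (here `Dl` is the
vertex set of `D_-` and `Cm` its terminal `C_-`) that are non-accessible to `C_-` in
`D_- − U`. -/
noncomputable def TSet (G : SimpleGraph V) (d : ℕ) {k : ℕ} (f : V → Fin k)
    (Dl : Finset (Fin k)) (Cm U : Fin k) : Finset (Fin k) :=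
  (Dl.erase U).filter (fun W => ¬ AccToWithin G d f (Dl.erase U) W Cm)

/-- `U` is a valid choice of `U_-`: it belongs to `D_-` and minimises the number of
classes of `D_- − U` that are non-accessible to `C_-` there. -/
def IsUminus (G : SimpleGraph V) (d : ℕ) {k : ℕ} (f : V → Fin k)
    (Dl : Finset (Fin k)) (Cm U : Fin k) : Prop :=
  U ∈ Dl ∧ ∀ U' ∈ Dl, (TSet G d f Dl Cm U).card ≤ (TSet G d f Dl Cm U').card

/-- `e` is a degeneracy ordering of the induced subgraph `G[S]` for the parameter `d`. -/
def IsDegOrdOn (G : SimpleGraph V) (d : ℕ) (S : Finset V)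
    (e : Fin S.card ≃ {x // x ∈ S}) : Prop :=
  ∀ i, (Finset.univ.filter (fun j => j < i ∧ G.Adj (e i : V) (e j : V))).card ≤ d

/-- The parameter `p` of a degeneracy ordering of `G[S]`: the largest (1-based) index
whose vertex has exactly `d` earlier neighbours (`0` if none). -/
noncomputable def ordPOn (G : SimpleGraph V) (d : ℕ) (S : Finset V)
    (e : Fin S.card ≃ {x // x ∈ S}) : ℕ :=
  (Finset.univ.filter (fun i =>
    (Finset.univ.filter (fun j => j < i ∧ G.Adj (e i : V) (e j : V))).card = d)).sup
      (fun i => (i : ℕ) + 1)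

/-- `p(G[S])`: the minimum of `ordPOn` over all degeneracy orderings of `G[S]`. -/
noncomputable def pMinOn (G : SimpleGraph V) (d : ℕ) (S : Finset V) : ℕ :=
  sInf {p | ∃ e : Fin S.card ≃ {x // x ∈ S}, IsDegOrdOn G d S e ∧ ordPOn G d S e = p}

/-- `V*` of the ordering `e` of `G[S]`: the set of its first `ordPOn G d S e` vertices. -/
noncomputable def VstarOf (G : SimpleGraph V) (d : ℕ) (S : Finset V)
    (e : Fin S.card ≃ {x // x ∈ S}) : Finset V :=
  (Finset.univ.filter (fun i : Fin S.card => (i : ℕ) < ordPOn G d S e)).image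
    (fun i => (e i : V))

/-- The size of the largest colour class, `|C_k|`. -/
def maxS {k : ℕ} (f : V → Fin k) : ℕ := Finset.univ.sup (fun i => (cls f i).card)

/-- The size of the smallest colour class, `|C_1|`. -/
noncomputable def minS {k : ℕ} (f : V → Fin k) : ℕ := sInf {m | ∃ i, (cls f i).card = m}

/-- `Σ_{V ∈ 𝒯} |V*| = Σ_{V ∈ 𝒯} p(G[V])`. -/
noncomputable def sumT (G : SimpleGraph V) (d : ℕ) {k : ℕ} (f : V → Fin k)
    (𝒯 : Finset (Fin k)) : ℕ :=
  ∑ i ∈ 𝒯, pMinOn G d (cls f i)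

/-- Lexicographic comparison of triples of naturals. -/
def Lex3Le (x y : ℕ × ℕ × ℕ) : Prop :=
  x.1 < y.1 ∨ (x.1 = y.1 ∧ (x.2.1 < y.2.1 ∨ (x.2.1 = y.2.1 ∧ x.2.2 ≤ y.2.2)))

/-- The triple `(|C_k| − |C_1|, b, Σ_{V ∈ 𝒯} |V*|)` associated with a colouring `f` and a
choice `𝒯` of the set of classes `𝒯`. -/
noncomputable def tripleOf (G : SimpleGraph V) (d : ℕ) {k : ℕ} (f : V → Fin k)
    (𝒯 : Finset (Fin k)) : ℕ × ℕ × ℕ :=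
  (maxS f - minS f, (Bset G d f).card, sumT G d f 𝒯)

/-- The near-equitable `d`-degenerate colouring `f` (with its associated set `𝒯f`) is
minimal: its triple `(|C_k| − |C_1|, b, Σ_{V ∈ 𝒯} |V*|)` is lexicographically smallest
among all near-equitable `d`-degenerate `k`-colourings of `G` with their associated
choices of decomposition and `U_-`. -/
def MinimalNE (G : SimpleGraph V) (d : ℕ) {k : ℕ} (f : V → Fin k)
    (𝒯f : Finset (Fin k)) : Prop :=
  ∀ g : V → Fin k, IsDegenColoring G d g → NearEquitable (Fintype.card V) g →
    ∀ (q : ℕ) (hq : 0 < q) (𝒟 : Fin q → Finset (Fin k)) (trm : Fin q → Fin k),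
      IsDecomp G d g 𝒟 trm →
      ∀ U : Fin k,
        IsUminus G d g (𝒟 ⟨q - 1, by omega⟩) (trm ⟨q - 1, by omega⟩) U →
        Lex3Le (tripleOf G d f 𝒯f)
          (tripleOf G d g (TSet G d g (𝒟 ⟨q - 1, by omega⟩) (trm ⟨q - 1, by omega⟩) U))

/-- `G[S]` has an equitable `d`-degenerate `m`-colouring. -/
def HasEqDegenColOn (G : SimpleGraph V) (d : ℕ) (S : Finset V) (m : ℕ) : Prop :=
  ∃ g : V → Fin m,
    (∀ i, DegenOn G d (S.filter (fun v => g v = i))) ∧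
    (∀ i j, (S.filter (fun v => g v = i)).card ≤ (S.filter (fun v => g v = j)).card + 1)

lemma degenOn_insert_of_few_nbrs (G : SimpleGraph V) (d : ℕ) (S : Finset V) (v : V)
    (hS : DegenOn G d S) (hv : (S.filter (fun u => G.Adj v u)).card ≤ d) :
    DegenOn G d (insert v S) := by
  intro s hs hne
  by_cases hvs : v ∈ s
  · refine ⟨v, hvs, le_trans (Finset.card_le_card ?_) hv⟩
    intro u hu
    simp only [Finset.mem_filter] at hu ⊢
    refine ⟨?_, hu.2⟩
    rcases Finset.mem_insert.1 (hs hu.1) with h | h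
    · exact absurd (h ▸ hu.2) (G.irrefl)
    · exact h
  · refine hS s (fun u hu => ?_) hne
    rcases Finset.mem_insert.1 (hs hu) with h | h
    · exact absurd (h ▸ hu) hvs
    · exact h

/-- **Lemma 2.4(c).**  For every `V ∈ 𝒯`, each vertex `v ∈ V` is non-movable to any
colour class in `𝒜 \ (𝒯 ∪ {U_-})`; in particular, `v` has at least
`(d+1)(a − 1 − t)` neighbours in the union of the classes of `𝒜 \ (𝒯 ∪ {U_-})`. -/
theorem T_vertices_nonmovable
    (Δ d k : ℕ) (hΔ : 0 < Δ) (hd : 0 < d) (hk : 0 < k)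
    (hΔk : Δ + 1 ≤ (d + 1) * k)
    (G : SimpleGraph V)
    (hdeg : ∀ v : V, (Finset.univ.filter (fun u => G.Adj v u)).card ≤ Δ)
    (hnoeq : ¬ ∃ g : V → Fin k, IsDegenColoring G d g ∧ IsEquitable g)
    (f : V → Fin k) (hf : IsDegenColoring G d f)
    (hne : NearEquitable (Fintype.card V) f)
    (q : ℕ) (hq : 0 < q) (𝒟 : Fin q → Finset (Fin k)) (trm : Fin q → Fin k)
    (hdec : IsDecomp G d f 𝒟 trm)
    (Dl : Finset (Fin k)) (hDl : Dl = 𝒟 ⟨q - 1, by omega⟩)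
    (Cm : Fin k) (hCm : Cm = trm ⟨q - 1, by omega⟩)
    (Um : Fin k) (hUm : IsUminus G d f Dl Cm Um)
    (Tf : Finset (Fin k)) (hTf : Tf = TSet G d f Dl Cm Um)
    (hmin : MinimalNE G d f Tf) :
    ∀ i ∈ Tf, ∀ v : V, f v = i →
      (∀ j : Fin k, Accessible G d f j → j ∉ Tf → j ≠ Um → ¬ Movable G d f v j) ∧
      (d + 1) * ((Aset G d f).card - 1 - Tf.card) ≤
        (Finset.univ.filter (fun u =>
          G.Adj v u ∧ Accessible G d f (f u) ∧ f u ∉ Tf ∧ f u ≠ Um)).card := by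
  have hlt : q - 1 < q := by omega
  set lix : Fin q := ⟨q - 1, hlt⟩ with hlix
  have hDl2 : Dl = 𝒟 lix := hDl
  have hCm2 : Cm = trm lix := hCm
  subst hDl2; subst hCm2; subst hTf
  obtain ⟨hstep, hmins, hallacc⟩ := hdec
  have hiffL := (hstep lix).2.2.2
  have hDsub : ∀ u, u ∈ 𝒟 lix → Accessible G d f u := fun u hu => ((hiffL u).1 hu).1
  intro i hiT v hfv
  have hiT' := hiT
  rw [TSet, Finset.mem_filter, Finset.mem_erase] at hiT'
  obtain ⟨⟨hiUm, hiDl⟩, hiacc⟩ := hiT'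
  have part1 : ∀ j : Fin k, Accessible G d f j →
      j ∉ TSet G d f (𝒟 lix) (trm lix) Um → j ≠ Um → ¬ Movable G d f v j := by
    intro j hjacc hjT hjU hmov
    have hij : i ≠ j := fun h => hjT (h ▸ hiT)
    have harc : MvArc G d f i j := ⟨hij, v, hfv, hmov⟩
    by_cases hjDl : j ∈ 𝒟 lix
    · have hjE : j ∈ (𝒟 lix).erase Um := Finset.mem_erase.2 ⟨hjU, hjDl⟩
      have hjto : AccToWithin G d f ((𝒟 lix).erase Um) j (trm lix) := by
        by_contra hc
        exact hjT (Finset.mem_filter.2 ⟨hjE, hc⟩)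
      exact hiacc (Relation.ReflTransGen.head
        ⟨Finset.mem_erase.2 ⟨hiUm, hiDl⟩, hjE, harc⟩ hjto)
    · obtain ⟨i', hji'⟩ := hallacc j hjacc
      have hne' : i' ≠ lix := fun h => hjDl (h ▸ hji')
      have hi'last : i' < lix := by
        refine lt_of_le_of_ne ?_ hne'
        rw [Fin.le_def]
        have := i'.isLt
        simp only [hlix]
        omega
      obtain ⟨hjacc', hjUB, hjTo⟩ := ((hstep i').2.2.2 j).1 hji'
      have hiTo : AccTo G d f i (trm i') := Relation.ReflTransGen.head harc hjTo
      have hiAcc : Accessible G d f i := hDsub i hiDl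
      have hiUB_last : i ∉ UsedBefore 𝒟 lix := ((hiffL i).1 hiDl).2.1
      have hiUB : i ∉ UsedBefore 𝒟 i' := by
        intro hmem
        apply hiUB_last
        rw [UsedBefore, Finset.mem_biUnion] at hmem ⊢
        obtain ⟨x, hx, hix⟩ := hmem
        simp only [Finset.mem_filter, Finset.mem_univ, true_and] at hx
        exact ⟨x, by simp [lt_trans hx hi'last], hix⟩
      have hiD : i ∈ 𝒟 i' := ((hstep i').2.2.2 i).2 ⟨hiAcc, hiUB, hiTo⟩
      apply hiUB_last
      rw [UsedBefore, Finset.mem_biUnion]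
      exact ⟨i', by simp [hi'last], hiD⟩
  refine ⟨part1, ?_⟩
  classical
  set Tf := TSet G d f (𝒟 lix) (trm lix) Um with hTf
  have hUmA : Um ∈ Aset G d f :=
    Finset.mem_filter.2 ⟨Finset.mem_univ _, hDsub Um hUm.1⟩
  have hTsub : Tf ⊆ (Aset G d f).erase Um := by
    intro W hW
    rw [hTf, TSet, Finset.mem_filter, Finset.mem_erase] at hW
    exact Finset.mem_erase.2 ⟨hW.1.1,
      Finset.mem_filter.2 ⟨Finset.mem_univ _, hDsub W hW.1.2⟩⟩
  set S' : Finset (Fin k) := ((Aset G d f).erase Um) \ Tf with hS'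
  have hcardS' : S'.card = (Aset G d f).card - 1 - Tf.card := by
    rw [hS', Finset.card_sdiff_of_subset hTsub, Finset.card_erase_of_mem hUmA]
  set nb : Fin k → Finset V := fun W => (cls f W).filter (fun u => G.Adj v u) with hnb
  have hnb_card : ∀ W ∈ S', d + 1 ≤ (nb W).card := by
    intro W hW
    rw [hS', Finset.mem_sdiff, Finset.mem_erase] at hW
    obtain ⟨⟨hWUm, hWA⟩, hWT⟩ := hW
    by_contra hle
    push_neg at hle
    have hmv : Movable G d f v W := by
      refine ⟨?_, degenOn_insert_of_few_nbrs G d (cls f W) v (hf W)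
        (Nat.lt_succ_iff.1 hle)⟩
      rw [hfv]
      exact fun h => hWT (h ▸ hiT)
    exact part1 W (Finset.mem_filter.1 hWA).2 hWT hWUm hmv
  have hdisj : ∀ W1 ∈ S', ∀ W2 ∈ S', W1 ≠ W2 → Disjoint (nb W1) (nb W2) := by
    intro W1 _ W2 _ hne12
    rw [Finset.disjoint_left]
    intro u hu1 hu2
    rw [hnb] at hu1 hu2
    simp only [Finset.mem_filter, cls, Finset.mem_univ, true_and] at hu1 hu2
    exact hne12 (hu1.1 ▸ hu2.1)
  have hsub : S'.biUnion nb ⊆ Finset.univ.filter (fun u =>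
      G.Adj v u ∧ Accessible G d f (f u) ∧ f u ∉ Tf ∧ f u ≠ Um) := by
    intro u hu
    rw [Finset.mem_biUnion] at hu
    obtain ⟨W, hW, hu⟩ := hu
    rw [hS', Finset.mem_sdiff, Finset.mem_erase] at hW
    rw [hnb] at hu
    simp only [Finset.mem_filter, cls, Finset.mem_univ, true_and] at hu
    obtain ⟨hfu, hadj⟩ := hu
    refine Finset.mem_filter.2 ⟨Finset.mem_univ _, hadj, ?_, ?_, ?_⟩
    · rw [hfu]; exact (Finset.mem_filter.1 hW.1.2).2
    · rw [hfu]; exact hW.2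
    · rw [hfu]; exact hW.1.1
  calc (d + 1) * ((Aset G d f).card - 1 - Tf.card)
      = ∑ _W ∈ S', (d + 1) := by
        rw [Finset.sum_const, hcardS', smul_eq_mul, mul_comm]
    _ ≤ ∑ W ∈ S', (nb W).card := Finset.sum_le_sum hnb_card
    _ = (S'.biUnion nb).card := (Finset.card_biUnion hdisj).symm
    _ ≤ _ := Finset.card_le_card hsub
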